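/- Let k be a positive integer and p a prime such that 2p − 1 is also prime, gcd(p, k) = 1, gcd(2p − 1, k) = 1, and (p − 1) divides k. Then n = p·k/(p−1) is a positive integer satisfying φ(n+k) = 2·φ(n), where φ denotes Euler's totient function. -/
import Mathlib


theorem prime_p_two_p_sub_one_solution
    (k p : ℕ) (hk : 0 < k) (hp : Nat.Prime p) (hp2 : Nat.Prime (2 * p - 1))
    (hc1 : Nat.gcd p k = 1) (hc2 : Nat.gcd (2 * p - 1) k = 1)
    (hdvd : (p - 1) ∣ k) :
    0 < p * k / (p - 1) ∧
    Nat.totient (p * k / (p - 1) + k) = 2 * Nat.totient (p * k / (p - 1)) := by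
  obtain ⟨m, hm⟩ := hdvd
  have hp1 : 0 < p - 1 := Nat.sub_pos_of_lt hp.one_lt
  have hm0 : 0 < m := by
    rcases Nat.eq_zero_or_pos m with h | h
    · simp [h, hm] at hk
    · exact h
  have key : p * k / (p - 1) = p * m := by
    rw [hm, ← mul_assoc, mul_comm p (p - 1), mul_assoc,
      Nat.mul_div_cancel_left _ hp1]
  rw [key]
  have hmd : m ∣ k := ⟨p - 1, by rw [hm, mul_comm]⟩
  have hpm : Nat.Coprime p m := (Nat.Coprime.coprime_dvd_right hmd hc1)
  have hqm : Nat.Coprime (2 * p - 1) m := (Nat.Coprime.coprime_dvd_right hmd hc2)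
  have hsum : p * m + k = (2 * p - 1) * m := by
    have h : p + (p - 1) = 2 * p - 1 := by omega
    rw [hm, ← add_mul, h]
  constructor
  · exact Nat.mul_pos hp.pos hm0
  · rw [hsum, Nat.totient_mul hqm, Nat.totient_mul hpm,
      Nat.totient_prime hp, Nat.totient_prime hp2]
    have h2 : 2 * p - 1 - 1 = 2 * (p - 1) := by omega
    rw [h2, mul_assoc]
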